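/- Let Γ = F ⋊_φ ℤ where F is a group with trivial centre. If the image of φ in Out(F) has infinite order, then the centre of Γ is trivial. -/

import Mathlib

/-- If `F` has trivial centre and the image of `φ` in `Out(F)` has infinite order
(no positive power of `φ` is inner), then `F ⋊_φ ℤ` has trivial centre. -/
theorem stmt_2 (F : Type*) [Group F] (hF : Subgroup.center F = ⊥) (φ : MulAut F)
    (h : ∀ n : ℕ, 0 < n → ∀ y : F, φ ^ n ≠ MulAut.conj y) :
    Subgroup.center (F ⋊[zpowersHom (MulAut F) φ] Multiplicative ℤ) = ⊥ := by
  rw [Subgroup.eq_bot_iff_forall]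
  intro z hz
  rw [Subgroup.mem_center_iff] at hz
  set m : ℤ := Multiplicative.toAdd z.right with hm
  have key : ∀ c : F, (φ ^ m) c = z.left⁻¹ * c * z.left := by
    intro c
    have h1 := congrArg SemidirectProduct.left (hz (SemidirectProduct.inl c))
    simp [SemidirectProduct.mul_left, zpowersHom_apply] at h1
    rw [hm, mul_assoc, h1, inv_mul_cancel_left]
  have keyA : φ ^ m = MulAut.conj z.left⁻¹ := by
    ext c
    simpa [MulAut.conj_apply, mul_assoc] using key c
  have hm0 : m = 0 := by
    by_contra hne
    rcases lt_or_gt_of_ne hne with hlt | hgt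
    · have hpos : 0 < (-m).toNat := by omega
      apply h (-m).toNat hpos z.left
      have : φ ^ (-m) = MulAut.conj z.left := by
        rw [zpow_neg, keyA]
        ext c
        simp [MulAut.conj_apply]
      rw [← this, ← zpow_natCast]
      congr 1
      omega
    · apply h m.toNat (by omega) z.left⁻¹
      rw [← keyA, ← zpow_natCast]
      congr 1
      omega
  have hl : z.left = 1 := by
    have : z.left ∈ Subgroup.center F := by
      rw [Subgroup.mem_center_iff]
      intro g
      have hg := key g
      rw [hm0] at hg
      simp at hg
      conv_rhs => rw [hg]
      group
    rw [hF, Subgroup.mem_bot] at this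
    exact this
  have hr : z.right = 1 := by
    have : Multiplicative.toAdd z.right = Multiplicative.toAdd (1 : Multiplicative ℤ) := by
      exact hm0.trans toAdd_one.symm
    exact Multiplicative.toAdd.injective this
  exact SemidirectProduct.ext (by simp [hl]) (by simp [hr])
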